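/- For partitions λ with at most k−1 (nonzero) parts and λ₁ = m fixed (m ≥ 1), the ideal of ℂ[x₁,…,x_k] generated by all Schur polynomials S_λ with λ₁ = m and at most k−1 parts equals the ideal generated by the complete homogeneous symmetric polynomials h_m, h_{m+1}, …, h_{m+k−2}. -/

import Mathlib

open MvPolynomial

/-- The complete homogeneous symmetric polynomial `h_j` in `k` variables. -/
noncomputable def hPoly (k j : ℕ) : MvPolynomial (Fin k) ℂ :=
  ∑ μ ∈ Finset.Nat.antidiagonalTuple k j, ∏ i : Fin k, X i ^ μ i

/-- `h_j` for an integer index, vanishing for negative `j`. -/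
noncomputable def hPolyZ (k : ℕ) (j : ℤ) : MvPolynomial (Fin k) ℂ :=
  if 0 ≤ j then hPoly k j.toNat else 0

/-- The Schur polynomial `S_λ` in `k` variables, via the first Jacobi–Trudi formula
`S_λ = det((h_{λ_i + j − i})_{i,j=1}^k)`. -/
noncomputable def schurPoly (k : ℕ) (lam : Fin k → ℕ) : MvPolynomial (Fin k) ℂ :=
  Matrix.det (Matrix.of fun i j : Fin k => hPolyZ k (((lam i : ℤ) + j.1) - i.1))

set_option maxHeartbeats 1000000

lemma hPoly_zero (k : ℕ) : hPoly k 0 = 1 := by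
  simp [hPoly, Finset.Nat.antidiagonalTuple_zero_right]

lemma hPolyZ_zero (k : ℕ) : hPolyZ k 0 = 1 := by simp [hPolyZ, hPoly_zero]

lemma hPolyZ_neg (k : ℕ) (j : ℤ) (h : j < 0) : hPolyZ k j = 0 := by
  simp [hPolyZ, not_le.2 h]

lemma hPolyZ_coe (k j : ℕ) : hPolyZ k j = hPoly k j := by
  simp [hPolyZ]

def hookc (a : ℤ) (r i : ℕ) : ℤ := if i = 0 then a else if i ≤ r then 1 else 0

lemma hookc_le_one {a : ℤ} {r i : ℕ} (h1 : i ≠ 0) : hookc a r i ≤ 1 := by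
  unfold hookc; split_ifs <;> omega

lemma hookc_eq_zero {a : ℤ} {r i : ℕ} (h1 : i ≠ 0) (h2 : r < i) : hookc a r i = 0 := by
  unfold hookc; split_ifs <;> omega

lemma detRowZero {R : Type*} [CommRing R] (H : ℤ → R) (h0 : H 0 = 1)
    (hneg : ∀ j : ℤ, j < 0 → H j = 0) :
    ∀ (n : ℕ) (a : ℤ),
      (Matrix.of fun i j : Fin (n + 1) => H (hookc a 0 i.1 + j.1 - i.1)).det = H a := by
  intro n
  induction n with
  | zero => intro a; simp [Matrix.det_fin_one, hookc]
  | succ n ih =>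
    intro a
    rw [Matrix.det_succ_column_zero]
    rw [Finset.sum_eq_single_of_mem 0 (Finset.mem_univ _)]
    · have hsub : ((Matrix.of fun i j : Fin (n + 2) => H (hookc a 0 i.1 + j.1 - i.1)).submatrix
          (Fin.succAbove 0) Fin.succ) =
          (Matrix.of fun i j : Fin (n + 1) => H (hookc 0 0 i.1 + j.1 - i.1)) := by
        ext i j
        simp only [Matrix.submatrix_apply, Matrix.of_apply, Fin.succAbove_zero, Fin.val_succ,
          hookc, Nat.add_one_ne_zero, if_false]
        congr 1
        split_ifs <;> omega
      rw [hsub, ih 0]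
      have h00 : hookc a 0 ((0 : Fin (n+2)) : ℕ) + (((0 : Fin (n+2)) : ℕ) : ℤ)
          - (((0 : Fin (n+2)) : ℕ) : ℤ) = a := by
        simp [hookc]
      simp only [Matrix.of_apply, h00, h0]
      simp
    · intro b _ hb
      have hb0 : (b : ℕ) ≠ 0 := fun h => hb (Fin.ext (by rw [h]; simp))
      have hlt : hookc a 0 (b : ℕ) - ((b : ℕ) : ℤ) < 0 := by
        have := hookc_eq_zero (a := a) (r := 0) hb0 (by omega)
        omega
      simp [hneg _ hlt]

lemma detHook {R : Type*} [CommRing R] (H : ℤ → R) (h0 : H 0 = 1)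
    (hneg : ∀ j : ℤ, j < 0 → H j = 0) :
    ∀ (r n : ℕ) (a : ℤ), r < n →
      (Matrix.of fun i j : Fin n => H (hookc a r i.1 + j.1 - i.1)).det
        - (-1) ^ r * H (a + r) ∈
      Ideal.span {x : R | ∃ i : ℕ, i < r ∧ x = H (a + i)} := by
  intro r
  induction r with
  | zero =>
    intro n a hn
    obtain ⟨n, rfl⟩ : ∃ n', n = n' + 1 := ⟨n - 1, by omega⟩
    have hset : {x : R | ∃ i : ℕ, i < 0 ∧ x = H (a + i)} = ∅ := by
      ext x; simp
    rw [hset, Ideal.span_empty, Ideal.mem_bot, detRowZero H h0 hneg]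
    norm_num
  | succ r ih =>
    intro n a hn
    obtain ⟨N, rfl⟩ : ∃ N, n = N + 2 := ⟨n - 2, by omega⟩
    have hrN : r < N + 1 := by omega
    have hz : ∀ i : Fin N,
        (Matrix.of fun i j : Fin (N+2) => H (hookc a (r+1) i.1 + j.1 - i.1)) i.succ.succ 0 = 0 := by
      intro i
      have h1 : (i.1 + 1 + 1) ≠ 0 := by omega
      have hle := hookc_le_one (a := a) (r := r+1) h1
      show H _ = 0
      apply hneg
      simp only [Fin.val_succ, Fin.val_zero]
      push_cast
      omega
    have hm0 : ((Matrix.of fun i j : Fin (N+2) => H (hookc a (r+1) i.1 + j.1 - i.1)).submatrix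
        (Fin.succAbove 0) Fin.succ) =
        (Matrix.of fun i j : Fin (N+1) => H (hookc 1 r i.1 + j.1 - i.1)) := by
      ext i j
      simp only [Matrix.submatrix_apply, Matrix.of_apply, Fin.succAbove_zero, Fin.val_succ,
        hookc, Nat.add_one_ne_zero, if_false]
      congr 1
      split_ifs <;> omega
    have hval : ∀ i : Fin (N+1), (((Fin.succ (0 : Fin (N+1))).succAbove i) : ℕ)
        = if i.1 < 1 then i.1 else i.1 + 1 := by
      intro i
      rw [Fin.succAbove]
      split_ifs with h1 h2 h3
      · simp
      · exfalso; apply h2; simpa [Fin.lt_def] using h1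
      · exfalso; apply h1; simpa [Fin.lt_def] using h3
      · simp
    have hm1 : ((Matrix.of fun i j : Fin (N+2) => H (hookc a (r+1) i.1 + j.1 - i.1)).submatrix
        (Fin.succAbove (Fin.succ 0)) Fin.succ) =
        (Matrix.of fun i j : Fin (N+1) => H (hookc (a+1) r i.1 + j.1 - i.1)) := by
      ext i j
      simp only [Matrix.submatrix_apply, Matrix.of_apply, Fin.val_succ]
      rcases Nat.eq_zero_or_pos i.1 with hi | hi
      · rw [show (((Fin.succ (0 : Fin (N+1))).succAbove i) : ℕ) = 0 by rw [hval i]; simp [hi]]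
        rw [show hookc a (r+1) 0 = a from rfl, show hookc (a+1) r i.1 = a + 1 by
          unfold hookc; rw [if_pos hi]]
        congr 1
        omega
      · rw [show (((Fin.succ (0 : Fin (N+1))).succAbove i) : ℕ) = i.1 + 1 by
          rw [hval i]; rw [if_neg (by omega)]]
        congr 1
        unfold hookc
        split_ifs <;> first | contradiction | omega
    have e0 : (Matrix.of fun i j : Fin (N+2) => H (hookc a (r+1) i.1 + j.1 - i.1)) 0 0 = H a := by
      simp [hookc]
    have e1 : (Matrix.of fun i j : Fin (N+2) => H (hookc a (r+1) i.1 + j.1 - i.1))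
        (Fin.succ 0) 0 = 1 := by
      show H _ = 1
      have h11 : hookc a (r+1) ((Fin.succ (0 : Fin (N+1))) : ℕ) = 1 := by
        unfold hookc; simp
      rw [h11]
      simp [h0]
    have hdet : (Matrix.of fun i j : Fin (N+2) => H (hookc a (r+1) i.1 + j.1 - i.1)).det
        = H a * (Matrix.of fun i j : Fin (N+1) => H (hookc 1 r i.1 + j.1 - i.1)).det
          - (Matrix.of fun i j : Fin (N+1) => H (hookc (a+1) r i.1 + j.1 - i.1)).det := by
      rw [Matrix.det_succ_column_zero, Fin.sum_univ_succ, Fin.sum_univ_succ]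
      rw [Finset.sum_eq_zero (fun i _ => by rw [hz i]; ring)]
      rw [hm0, hm1, e0, e1]
      simp
      ring
    rw [hdet]
    have hmem1 : H a * (Matrix.of fun i j : Fin (N+1) => H (hookc 1 r i.1 + j.1 - i.1)).det
        ∈ Ideal.span {x : R | ∃ i : ℕ, i < r + 1 ∧ x = H (a + i)} :=
      Ideal.mul_mem_right _ _ (Ideal.subset_span ⟨0, by omega, by norm_num⟩)
    have hmem2 : (Matrix.of fun i j : Fin (N+1) => H (hookc (a+1) r i.1 + j.1 - i.1)).det
        - (-1) ^ r * H ((a+1) + r)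
        ∈ Ideal.span {x : R | ∃ i : ℕ, i < r + 1 ∧ x = H (a + i)} := by
      refine Ideal.span_mono ?_ (ih (N+1) (a+1) hrN)
      rintro x ⟨i, hi, rfl⟩
      exact ⟨i + 1, by omega, by congr 1; push_cast; ring⟩
    have hfin := Ideal.sub_mem _ hmem1 hmem2
    have hHe : H (a + ((r : ℕ) + 1 : ℤ)) = H (a + 1 + (r : ℤ)) := by
      congr 1; ring
    convert hfin using 1
    push_cast
    rw [hHe]
    push_cast
    ring

/-- For fixed `m ≥ 1`, the ideal of `ℂ[x₁,…,x_k]` generated by all Schur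
polynomials `S_λ` with `λ₁ = m` and at most `k−1` parts equals the ideal generated by
the complete homogeneous symmetric polynomials `h_m, h_{m+1}, …, h_{m+k−2}`. -/
theorem stmt15 (k m : ℕ) (hk : 1 ≤ k) (hm : 1 ≤ m) :
    Ideal.span {p : MvPolynomial (Fin k) ℂ | ∃ lam : Fin k → ℕ,
        Antitone lam ∧ lam ⟨0, by omega⟩ = m ∧ lam ⟨k - 1, by omega⟩ = 0 ∧
        p = schurPoly k lam} =
    Ideal.span {p : MvPolynomial (Fin k) ℂ | ∃ j : ℕ,
        m ≤ j ∧ j ≤ m + k - 2 ∧ p = hPoly k j} := by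
  rcases Nat.lt_or_ge k 2 with hk2 | hk2
  · -- k = 1 : both generating sets are empty
    obtain rfl : k = 1 := by omega
    have hL : {p : MvPolynomial (Fin 1) ℂ | ∃ lam : Fin 1 → ℕ,
        Antitone lam ∧ lam ⟨0, by omega⟩ = m ∧ lam ⟨1 - 1, by omega⟩ = 0 ∧
        p = schurPoly 1 lam} = ∅ := by
      ext p
      simp only [Set.mem_setOf_eq, Set.mem_empty_iff_false, iff_false, not_exists]
      rintro lam ⟨_, h1, h2, _⟩
      have heq : (⟨0, by omega⟩ : Fin 1) = ⟨1 - 1, by omega⟩ := Subsingleton.elim _ _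
      rw [heq, h2] at h1
      omega
    have hR : {p : MvPolynomial (Fin 1) ℂ | ∃ j : ℕ,
        m ≤ j ∧ j ≤ m + 1 - 2 ∧ p = hPoly 1 j} = ∅ := by
      ext p
      simp only [Set.mem_setOf_eq, Set.mem_empty_iff_false, iff_false, not_exists]
      rintro j ⟨h1, h2, _⟩
      omega
    rw [hL, hR]
  · obtain ⟨k', rfl⟩ : ∃ k', k = k' + 2 := ⟨k - 2, by omega⟩
    have h0fin : (0 : Fin (k' + 2)) = ⟨0, by omega⟩ := by ext; simp
    apply le_antisymm
    · -- Schur polynomials lie in the h-ideal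
      rw [Ideal.span_le]
      rintro p ⟨lam, hanti, hl0, hlast, rfl⟩
      have hl0' : lam 0 = m := by rw [h0fin]; exact hl0
      have hlast' : lam ⟨k' + 1, by omega⟩ = 0 := hlast
      show schurPoly (k' + 2) lam ∈ _
      unfold schurPoly
      rw [Matrix.det_apply']
      apply Ideal.sum_mem
      intro σ _
      apply Ideal.mul_mem_left
      obtain ⟨i0, hi0⟩ := σ.surjective 0
      by_cases hc : (i0 : ℕ) = k' + 1
      · -- row k'+1 appears in an earlier column, giving a zero factor
        obtain ⟨i1, hi1⟩ := σ.surjective ⟨k' + 1, by omega⟩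
        have hne : i1 ≠ i0 := by
          intro h
          rw [h, hi0] at hi1
          have h2 := congrArg Fin.val hi1
          simp only [Fin.val_zero] at h2
          omega
        have hval : (i1 : ℕ) < k' + 1 := by
          have h1 := i1.isLt
          have h2 : (i1 : ℕ) ≠ k' + 1 := fun h => hne (Fin.ext (by omega))
          omega
        have hfac : (Matrix.of fun i j : Fin (k' + 2) =>
            hPolyZ (k' + 2) (((lam i : ℤ) + j.1) - i.1)) (σ i1) i1 = 0 := by
          rw [hi1]
          simp only [Matrix.of_apply, Fin.val_mk]
          apply hPolyZ_neg
          rw [hlast']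
          push_cast
          omega
        have hzero : (∏ i : Fin (k' + 2), (Matrix.of fun i j : Fin (k' + 2) =>
            hPolyZ (k' + 2) (((lam i : ℤ) + j.1) - i.1)) (σ i) i) = 0 :=
          Finset.prod_eq_zero (Finset.mem_univ i1) hfac
        rw [hzero]
        exact Ideal.zero_mem _
      · -- the factor in row 0 is a generator
        rw [← Finset.mul_prod_erase _ _ (Finset.mem_univ i0)]
        apply Ideal.mul_mem_right
        apply Ideal.subset_span
        refine ⟨m + (i0 : ℕ), Nat.le_add_right _ _, by
          have := i0.isLt; omega, ?_⟩
        have hfac : (Matrix.of fun i j : Fin (k' + 2) =>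
            hPolyZ (k' + 2) (((lam i : ℤ) + j.1) - i.1)) (σ i0) i0
            = hPoly (k' + 2) (m + (i0 : ℕ)) := by
          rw [hi0]
          simp only [Matrix.of_apply, Fin.val_zero]
          rw [show (((lam (0 : Fin (k' + 2)) : ℤ)) + ((i0 : ℕ) : ℤ) - ((0 : ℕ) : ℤ))
            = ((m + (i0 : ℕ) : ℕ) : ℤ) from by
              rw [hl0']; push_cast; ring]
          exact hPolyZ_coe _ _
        rw [hfac]
    · -- the h's lie in the Schur ideal
      rw [Ideal.span_le]
      rintro p ⟨j, hj1, hj2, rfl⟩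
      have key : ∀ r : ℕ, r ≤ k' → hPoly (k' + 2) (m + r) ∈
          Ideal.span {p : MvPolynomial (Fin (k' + 2)) ℂ | ∃ lam : Fin (k' + 2) → ℕ,
            Antitone lam ∧ lam ⟨0, by omega⟩ = m ∧ lam ⟨k' + 2 - 1, by omega⟩ = 0 ∧
            p = schurPoly (k' + 2) lam} := by
        intro r
        induction r using Nat.strong_induction_on with
        | _ r ih =>
        intro hr
        set lam : Fin (k' + 2) → ℕ :=
          fun i => if i.1 = 0 then m else if i.1 ≤ r then 1 else 0 with hlam
        have hanti : Antitone lam := by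
          intro i i' hii'
          have : i.1 ≤ i'.1 := hii'
          simp only [hlam]
          split_ifs <;> omega
        have hmemS : schurPoly (k' + 2) lam ∈
            Ideal.span {p : MvPolynomial (Fin (k' + 2)) ℂ | ∃ lam : Fin (k' + 2) → ℕ,
              Antitone lam ∧ lam ⟨0, by omega⟩ = m ∧ lam ⟨k' + 2 - 1, by omega⟩ = 0 ∧
              p = schurPoly (k' + 2) lam} := by
          apply Ideal.subset_span
          exact ⟨lam, hanti, by simp [hlam], by simp [hlam]; omega, rfl⟩
        have hmat : schurPoly (k' + 2) lam =
            (Matrix.of fun i j : Fin (k' + 2) =>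
              hPolyZ (k' + 2) (hookc (m : ℤ) r i.1 + j.1 - i.1)).det := by
          unfold schurPoly
          congr 1
          ext i j
          simp only [Matrix.of_apply]
          congr 1
          simp only [hlam, hookc]
          split_ifs <;> push_cast <;> ring
        have hdh := detHook (hPolyZ (k' + 2)) (hPolyZ_zero _) (hPolyZ_neg _) r (k' + 2)
          (m : ℤ) (by omega)
        rw [← hmat] at hdh
        have hsub : Ideal.span {x : MvPolynomial (Fin (k' + 2)) ℂ |
            ∃ i : ℕ, i < r ∧ x = hPolyZ (k' + 2) ((m : ℤ) + i)} ≤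
            Ideal.span {p : MvPolynomial (Fin (k' + 2)) ℂ | ∃ lam : Fin (k' + 2) → ℕ,
              Antitone lam ∧ lam ⟨0, by omega⟩ = m ∧ lam ⟨k' + 2 - 1, by omega⟩ = 0 ∧
              p = schurPoly (k' + 2) lam} := by
          rw [Ideal.span_le]
          rintro x ⟨i, hi, rfl⟩
          have hx : hPolyZ (k' + 2) ((m : ℤ) + i) = hPoly (k' + 2) (m + i) := by
            rw [show ((m : ℤ) + i) = ((m + i : ℕ) : ℤ) from by push_cast; ring]
            exact hPolyZ_coe _ _
          rw [hx]
          exact ih i hi (by omega)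
        have hdh2 := hsub hdh
        have hfin := Ideal.sub_mem _ hmemS hdh2
        rw [sub_sub_cancel] at hfin
        have hsq := Ideal.mul_mem_left _ ((-1 : MvPolynomial (Fin (k' + 2)) ℂ) ^ r) hfin
        rw [← mul_assoc, ← mul_pow] at hsq
        simp only [neg_mul_neg, one_mul, one_pow] at hsq
        rwa [show hPolyZ (k' + 2) ((m : ℤ) + r) = hPoly (k' + 2) (m + r) from by
          rw [show ((m : ℤ) + r) = ((m + r : ℕ) : ℤ) from by push_cast; ring]
          exact hPolyZ_coe _ _] at hsq
      have := key (j - m) (by omega)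
      rwa [show m + (j - m) = j from by omega] at this
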